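/- SDP rank reduction with two constraints: if the complex semidefinite program maximize tr(CW) subject to tr(A₁W) ≥ b₁ (or ≤ b₁), tr(A₂W) ≤ b₂, W ⪰ 0 over Hermitian M×M matrices W has an optimal solution, then it has an optimal solution W* with rank(W*) ≤ 1, provided the optimal value is finite and b₂ > 0 with A₂ = I (so the feasible set is bounded). -/

import Mathlib

open scoped ComplexOrder
open Matrix

section AuxTH

variable {M : ℕ}

/-- conjugate symmetry of the form of a Hermitian matrix -/
lemma herm_conj (B : Matrix (Fin M) (Fin M) ℂ) (hB : B.IsHermitian) (u w : Fin M → ℂ) :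
    star (star u ⬝ᵥ B *ᵥ w) = star w ⬝ᵥ B *ᵥ u := by
  rw [Matrix.star_dotProduct, star_star, Matrix.star_mulVec, hB.eq,
    ← Matrix.dotProduct_mulVec]

lemma quad_real (B : Matrix (Fin M) (Fin M) ℂ) (hB : B.IsHermitian) (x : Fin M → ℂ) :
    (star x ⬝ᵥ B *ᵥ x) = ((star x ⬝ᵥ B *ᵥ x).re : ℂ) := by
  have h := herm_conj B hB x x
  exact (Complex.conj_eq_iff_re.mp h).symm

/-- expansion of Hermitian quadratic form along a real segment -/
lemma quad_expand (B : Matrix (Fin M) (Fin M) ℂ) (hB : B.IsHermitian) (u w : Fin M → ℂ)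
    (s t : ℝ) :
    (star ((s:ℂ) • u + (t:ℂ) • w) ⬝ᵥ B *ᵥ ((s:ℂ) • u + (t:ℂ) • w)).re
      = s^2 * (star u ⬝ᵥ B *ᵥ u).re + 2*s*t*(star u ⬝ᵥ B *ᵥ w).re
        + t^2 * (star w ⬝ᵥ B *ᵥ w).re := by
  have hsym : (star w ⬝ᵥ B *ᵥ u).re = (star u ⬝ᵥ B *ᵥ w).re := by
    rw [← herm_conj B hB u w, Complex.star_def, Complex.conj_re]
  simp only [star_add, star_smul, Matrix.mulVec_add, Matrix.mulVec_smul,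
    add_dotProduct, dotProduct_add, smul_dotProduct,
    dotProduct_smul, Complex.star_def, Complex.conj_ofReal, smul_eq_mul]
  simp only [Complex.add_re, Complex.mul_re, Complex.ofReal_re, Complex.ofReal_im]
  rw [hsym]
  ring

/-- quadratic form of a real linear combination of matrices -/
lemma quad_lin (A C : Matrix (Fin M) (Fin M) ℂ) (c1 c2 : ℝ) (x : Fin M → ℂ) :
    (star x ⬝ᵥ ((c1:ℂ) • A + (c2:ℂ) • C) *ᵥ x).re
      = c1 * (star x ⬝ᵥ A *ᵥ x).re + c2 * (star x ⬝ᵥ C *ᵥ x).re := by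
  simp only [Matrix.add_mulVec, Matrix.smul_mulVec, dotProduct_add,
    dotProduct_smul, smul_eq_mul, Complex.add_re, Complex.mul_re,
    Complex.ofReal_re, Complex.ofReal_im]
  ring

lemma self_dot (x : Fin M → ℂ) :
    star x ⬝ᵥ x = ((∑ i, Complex.normSq (x i) : ℝ) : ℂ) := by
  simp only [dotProduct, Pi.star_apply, Complex.star_def]
  push_cast
  congr 1
  ext i
  rw [Complex.normSq_eq_conj_mul_self]

lemma self_dot_re_nonneg (x : Fin M → ℂ) : 0 ≤ (star x ⬝ᵥ x).re := by
  rw [self_dot]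
  simp only [Complex.ofReal_re]
  exact Finset.sum_nonneg fun i _ => Complex.normSq_nonneg _

lemma self_dot_re_pos (x : Fin M → ℂ) (hx : x ≠ 0) : 0 < (star x ⬝ᵥ x).re := by
  rcases (self_dot_re_nonneg x).lt_or_eq with h | h
  · exact h
  · exfalso; apply hx
    rw [self_dot] at h
    simp only [Complex.ofReal_re] at h
    have := (Finset.sum_eq_zero_iff_of_nonneg (fun i _ => Complex.normSq_nonneg (x i))).mp h.symm
    funext i
    exact Complex.normSq_eq_zero.mp (this i (Finset.mem_univ i))

lemma quad_smul (B : Matrix (Fin M) (Fin M) ℂ) (μ : ℂ) (x : Fin M → ℂ) :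
    star (μ • x) ⬝ᵥ B *ᵥ (μ • x) = (starRingEnd ℂ μ) * μ * (star x ⬝ᵥ B *ᵥ x) := by
  simp only [star_smul, Matrix.mulVec_smul, smul_dotProduct, dotProduct_smul,
    smul_eq_mul, Complex.star_def]
  ring

lemma phase_choice (z : ℂ) : ∃ μ : ℂ, Complex.normSq μ = 1 ∧ (μ * z).re = 0 := by
  by_cases hz : z = 0
  · exact ⟨1, by simp, by simp [hz]⟩
  · refine ⟨Complex.I * (‖z‖ : ℂ) * z⁻¹, ?_, ?_⟩
    · simp only [Complex.normSq_mul, Complex.normSq_I, Complex.normSq_inv, one_mul,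
        Complex.normSq_ofReal]
      rw [← Complex.sq_norm, ← sq]
      field_simp [Complex.normSq_eq_zero, hz]
    · rw [mul_assoc, inv_mul_cancel₀ hz, mul_one]
      simp

lemma TH_segment (A C : Matrix (Fin M) (Fin M) ℂ) (hA : A.IsHermitian) (hC : C.IsHermitian)
    (u w : Fin M → ℂ) (hu : star u ⬝ᵥ u = 1) (hw : star w ⬝ᵥ w = 1)
    (a b : ℝ) (ha : 0 ≤ a) (hb : 0 ≤ b) (hab : a + b = 1) :
    ∃ x : Fin M → ℂ, star x ⬝ᵥ x = 1 ∧
      (star x ⬝ᵥ A *ᵥ x).re = a * (star u ⬝ᵥ A *ᵥ u).re + b * (star w ⬝ᵥ A *ᵥ w).re ∧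
      (star x ⬝ᵥ C *ᵥ x).re = a * (star u ⬝ᵥ C *ᵥ u).re + b * (star w ⬝ᵥ C *ᵥ w).re := by
  set pA := (star u ⬝ᵥ A *ᵥ u).re with hpA
  set pC := (star u ⬝ᵥ C *ᵥ u).re with hpC
  set qA := (star w ⬝ᵥ A *ᵥ w).re with hqA
  set qC := (star w ⬝ᵥ C *ᵥ w).re with hqC
  by_cases hpq : qA = pA ∧ qC = pC
  · exact ⟨u, hu, by rw [hpq.1, ← hpA]; linear_combination (-pA) * hab,
      by rw [hpq.2, ← hpC]; linear_combination (-pC) * hab⟩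
  -- direction and normal
  set d1 := qA - pA with hd1
  set d2 := qC - pC with hd2
  have hdpos : 0 < d1^2 + d2^2 := by
    rcases not_and_or.mp hpq with h | h
    · have : d1 ≠ 0 := sub_ne_zero.mpr h
      nlinarith [sq_nonneg d1, sq_nonneg d2, sq_pos_of_ne_zero this]
    · have : d2 ≠ 0 := sub_ne_zero.mpr h
      nlinarith [sq_nonneg d1, sq_nonneg d2, sq_pos_of_ne_zero this]
  set H : Matrix (Fin M) (Fin M) ℂ := ((-d2 : ℝ) : ℂ) • A + ((d1 : ℝ) : ℂ) • C with hH
  set K : Matrix (Fin M) (Fin M) ℂ := ((d1 : ℝ) : ℂ) • A + ((d2 : ℝ) : ℂ) • C with hK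
  have hHherm : H.IsHermitian := by
    simp only [Matrix.IsHermitian, hH, Matrix.conjTranspose_add, Matrix.conjTranspose_smul,
      hA.eq, hC.eq, Complex.star_def, Complex.conj_ofReal]
  have hKherm : K.IsHermitian := by
    simp only [Matrix.IsHermitian, hK, Matrix.conjTranspose_add, Matrix.conjTranspose_smul,
      hA.eq, hC.eq, Complex.star_def, Complex.conj_ofReal]
  set c : ℝ := -d2 * pA + d1 * pC with hc
  -- phase choice
  obtain ⟨μ, hμ1, hμ2⟩ := phase_choice ((star u ⬝ᵥ H *ᵥ w) - (c : ℂ) * (star u ⬝ᵥ w))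
  set w' : Fin M → ℂ := μ • w with hw'
  have hμμ : (starRingEnd ℂ μ) * μ = 1 := by
    rw [← Complex.normSq_eq_conj_mul_self, hμ1, Complex.ofReal_one]
  have hw'unit : star w' ⬝ᵥ w' = 1 := by
    rw [hw', star_smul, smul_dotProduct, dotProduct_smul, smul_eq_mul,
      smul_eq_mul, ← mul_assoc]
    rw [show (star μ : ℂ) = starRingEnd ℂ μ from rfl, hμμ, one_mul, hw]
  -- quadratic values at u, w'
  have hquadw' : ∀ B : Matrix (Fin M) (Fin M) ℂ,
      star w' ⬝ᵥ B *ᵥ w' = star w ⬝ᵥ B *ᵥ w := by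
    intro B
    rw [hw', quad_smul, hμμ, one_mul]
  set δ : ℝ := (star u ⬝ᵥ w').re with hδ
  -- H-values
  have hHu : (star u ⬝ᵥ H *ᵥ u).re = c := by
    rw [hH, quad_lin, ← hpA, ← hpC, hc]
  have hHw' : (star w' ⬝ᵥ H *ᵥ w').re = c := by
    rw [hquadw', hH, quad_lin, ← hqA, ← hqC, hc, hd1, hd2]; ring
  have hHuw' : (star u ⬝ᵥ H *ᵥ w').re = c * δ := by
    have h1 : star u ⬝ᵥ H *ᵥ w' = μ * ((star u ⬝ᵥ H *ᵥ w) - (c:ℂ) * (star u ⬝ᵥ w))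
        + (c:ℂ) * (star u ⬝ᵥ w') := by
      rw [hw', Matrix.mulVec_smul, dotProduct_smul, dotProduct_smul]
      ring_nf
    rw [h1, Complex.add_re, hμ2, zero_add, Complex.re_ofReal_mul, ← hδ]
  -- K-values
  set α : ℝ := (star u ⬝ᵥ K *ᵥ u).re with hα
  set γ : ℝ := (star w' ⬝ᵥ K *ᵥ w').re with hγ
  set β : ℝ := (star u ⬝ᵥ K *ᵥ w').re with hβ
  have hαval : α = d1 * pA + d2 * pC := by rw [hα, hK, quad_lin, ← hpA, ← hpC]
  have hγval : γ = d1 * qA + d2 * qC := by rw [hγ, hquadw', hK, quad_lin, ← hqA, ← hqC]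
  have hμ0 : μ ≠ 0 := by
    intro h; rw [h] at hμ1; simp at hμ1
  -- the path
  set xp : ℝ → (Fin M → ℂ) := fun t => ((1 - t : ℝ) : ℂ) • u + ((t : ℝ) : ℂ) • w' with hxp
  have hxpne : ∀ t ∈ Set.Icc (0:ℝ) 1, xp t ≠ 0 := by
    intro t ht h0
    by_cases ht0 : t = 0
    · rw [hxp] at h0
      simp only [ht0, sub_zero, Complex.ofReal_one, one_smul, Complex.ofReal_zero,
        zero_smul, add_zero] at h0
      rw [h0] at hu; simp at hu
    · have htμ : (t : ℂ) * μ ≠ 0 :=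
        mul_ne_zero (by exact_mod_cast ht0) hμ0
      have h1 : ((t : ℂ) * μ) • w = -(((1 - t : ℝ) : ℂ) • u) := by
        have h0' : ((1 - t : ℝ) : ℂ) • u + ((t:ℝ):ℂ) • w' = 0 := h0
        rw [hw', smul_smul] at h0'
        exact eq_neg_of_add_eq_zero_right h0'
      set lam : ℂ := ((t : ℂ) * μ)⁻¹ * (-((1 - t : ℝ) : ℂ)) with hlam
      have hwlam : w = lam • u := by
        have := congrArg (fun y => ((t : ℂ) * μ)⁻¹ • y) h1
        simp only [inv_smul_smul₀ htμ] at this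
        rw [hlam, ← smul_smul, neg_smul]
        exact this
      have hll : (starRingEnd ℂ lam) * lam = 1 := by
        have := hw
        rw [hwlam, star_smul, smul_dotProduct, dotProduct_smul, hu] at this
        simpa [smul_eq_mul] using this
      have hqAeq : qA = pA := by
        have : star w ⬝ᵥ A *ᵥ w = star u ⬝ᵥ A *ᵥ u := by
          rw [hwlam, quad_smul, hll, one_mul]
        rw [hqA, hpA, this]
      have hqCeq : qC = pC := by
        have : star w ⬝ᵥ C *ᵥ w = star u ⬝ᵥ C *ᵥ u := by
          rw [hwlam, quad_smul, hll, one_mul]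
        rw [hqC, hpC, this]
      exact hpq ⟨hqAeq, hqCeq⟩
  -- norm along the path
  set N : ℝ → ℝ := fun t => (1-t)^2 + 2*(1-t)*t*δ + t^2 with hN
  have hNval : ∀ t : ℝ, (star (xp t) ⬝ᵥ (xp t)).re = N t := by
    intro t
    have h := quad_expand 1 Matrix.isHermitian_one u w' (1-t) t
    simp only [Matrix.one_mulVec, hu, hw'unit, Complex.one_re, ← hδ] at h
    rw [hxp]
    simp only [h, hN]; ring
  have hNpos : ∀ t ∈ Set.Icc (0:ℝ) 1, 0 < N t := by
    intro t ht
    rw [← hNval t]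
    exact self_dot_re_pos _ (hxpne t ht)
  -- K along the path
  have hPval : ∀ t : ℝ, (star (xp t) ⬝ᵥ K *ᵥ (xp t)).re
      = (1-t)^2*α + 2*(1-t)*t*β + t^2*γ := by
    intro t
    have h := quad_expand K hKherm u w' (1-t) t
    rw [hxp]
    simp only [h, ← hα, ← hβ, ← hγ]
  -- H along the path
  have hQval : ∀ t : ℝ, (star (xp t) ⬝ᵥ H *ᵥ (xp t)).re = c * N t := by
    intro t
    have h := quad_expand H hHherm u w' (1-t) t
    rw [hxp]
    simp only [h, hHu, hHw', hHuw', hN]; ring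
  -- IVT
  set g : ℝ → ℝ := fun t => ((1-t)^2*α + 2*(1-t)*t*β + t^2*γ) / N t with hg
  have hgcont : ContinuousOn g (Set.Icc (0:ℝ) 1) := by
    apply ContinuousOn.div
    · fun_prop
    · fun_prop
    · exact fun t ht => (hNpos t ht).ne'
  have hg0 : g 0 = α := by
    simp only [hg, hN]; norm_num
  have hg1 : g 1 = γ := by
    simp only [hg, hN]; norm_num
  set τ : ℝ := a*α + b*γ with hτdef
  have hτmem : τ ∈ Set.uIcc (g 0) (g 1) := by
    rw [hg0, hg1, ← segment_eq_uIcc]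
    exact ⟨a, b, ha, hb, hab, by simp [smul_eq_mul, hτdef]⟩
  obtain ⟨t0, ht0, hgt0⟩ := intermediate_value_uIcc
    (by rw [Set.uIcc_of_le (zero_le_one : (0:ℝ) ≤ 1)]; exact hgcont) hτmem
  rw [Set.uIcc_of_le (zero_le_one : (0:ℝ) ≤ 1)] at ht0
  set y : Fin M → ℂ := xp t0 with hy
  set n : ℝ := N t0 with hn
  have hnpos : 0 < n := hNpos t0 ht0
  have hyK : (star y ⬝ᵥ K *ᵥ y).re = τ * n := by
    rw [hy, hPval t0]
    have := hgt0
    rw [hg] at this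
    field_simp [hnpos.ne'] at this
    rw [div_eq_iff (hNpos t0 ht0).ne'] at this
    rw [hn]; linear_combination this
  have hyH : (star y ⬝ᵥ H *ᵥ y).re = c * n := by
    rw [hy, hQval t0, hn]
  have hyy : star y ⬝ᵥ y = (n : ℂ) := by
    have h1 : star y ⬝ᵥ y = ((star y ⬝ᵥ y).re : ℂ) := by
      rw [self_dot]; simp
    rw [h1, hy, hNval t0, hn]
  -- normalize
  set s : ℝ := (Real.sqrt n)⁻¹ with hs
  have hss : s * s = n⁻¹ := by
    rw [hs, ← mul_inv]
    rw [Real.mul_self_sqrt hnpos.le]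
  set xh : Fin M → ℂ := (s : ℂ) • y with hxh
  have hxhunit : star xh ⬝ᵥ xh = 1 := by
    rw [hxh, star_smul, smul_dotProduct, dotProduct_smul, hyy]
    simp only [smul_eq_mul, Complex.star_def, Complex.conj_ofReal]
    norm_cast
    rw [← mul_assoc, hss, inv_mul_cancel₀ hnpos.ne']
  have hquadhat : ∀ B : Matrix (Fin M) (Fin M) ℂ,
      (star xh ⬝ᵥ B *ᵥ xh).re = n⁻¹ * (star y ⬝ᵥ B *ᵥ y).re := by
    intro B
    rw [hxh, quad_smul]
    simp only [Complex.star_def, Complex.conj_ofReal]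
    rw [← Complex.ofReal_mul, hss, Complex.re_ofReal_mul]
  set X : ℝ := (star xh ⬝ᵥ A *ᵥ xh).re with hX
  set Y : ℝ := (star xh ⬝ᵥ C *ᵥ xh).re with hY
  have eK' : d1*X + d2*Y = a*α + b*γ := by
    rw [hX, hY, ← quad_lin A C d1 d2 xh, ← hK, hquadhat K, hyK, ← hτdef]
    field_simp [hnpos.ne']
  have eH' : -d2*X + d1*Y = c := by
    rw [hX, hY, ← quad_lin A C (-d2) d1 xh]
    rw [show (((-d2:ℝ):ℂ) • A + ((d1:ℝ):ℂ) • C) = H from hH.symm, hquadhat H, hyH]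
    field_simp [hnpos.ne']
  -- solve the 2x2 linear system
  have h2 : -d2*(a*pA+b*qA) + d1*(a*pC+b*qC) = c := by
    rw [hc, hd1, hd2]
    linear_combination (qA*pC - qC*pA) * hab
  have h3 : d1*(a*pA+b*qA) + d2*(a*pC+b*qC) = a*α + b*γ := by
    rw [hαval, hγval]; ring
  have E1 : d1*(X - (a*pA+b*qA)) + d2*(Y - (a*pC+b*qC)) = 0 := by
    linear_combination eK' - h3
  have E2 : -d2*(X - (a*pA+b*qA)) + d1*(Y - (a*pC+b*qC)) = 0 := by
    linear_combination eH' - h2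
  have E3 : (d1^2+d2^2) * (X - (a*pA+b*qA)) = 0 := by
    linear_combination d1*E1 - d2*E2
  have E4 : (d1^2+d2^2) * (Y - (a*pC+b*qC)) = 0 := by
    linear_combination d2*E1 + d1*E2
  have hXf : X = a*pA + b*qA := by
    have := mul_eq_zero.mp E3
    rcases this with h | h
    · exact absurd h hdpos.ne'
    · linarith [sub_eq_zero.mp h]
  have hYf : Y = a*pC + b*qC := by
    rcases mul_eq_zero.mp E4 with h | h
    · exact absurd h hdpos.ne'
    · linarith [sub_eq_zero.mp h]
  exact ⟨xh, hxhunit, by rw [← hX, hXf, hpA, hqA], by rw [← hY, hYf, hpC, hqC]⟩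

lemma TH_convex (A C : Matrix (Fin M) (Fin M) ℂ) (hA : A.IsHermitian) (hC : C.IsHermitian) :
    Convex ℝ {p : ℝ × ℝ | ∃ x : Fin M → ℂ, star x ⬝ᵥ x = 1 ∧
      p.1 = (star x ⬝ᵥ A *ᵥ x).re ∧ p.2 = (star x ⬝ᵥ C *ᵥ x).re} := by
  rw [convex_iff_segment_subset]
  rintro p ⟨u, hu, hp1, hp2⟩ q ⟨w, hw, hq1, hq2⟩ z ⟨a, b, ha, hb, hab, hz⟩
  obtain ⟨x, hx, h1, h2⟩ := TH_segment A C hA hC u w hu hw a b ha hb hab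
  refine ⟨x, hx, ?_, ?_⟩
  · rw [← hz, h1, ← hp1, ← hq1]
    simp [smul_eq_mul]
  · rw [← hz, h2, ← hp2, ← hq2]
    simp [smul_eq_mul]

lemma psd_decomp [NeZero M] (W : Matrix (Fin M) (Fin M) ℂ) (hW : W.PosSemidef) :
    ∃ (lam : Fin M → ℝ) (vc : Fin M → (Fin M → ℂ)),
      (∀ i, 0 ≤ lam i) ∧ (∀ i, star (vc i) ⬝ᵥ (vc i) = 1) ∧
      ∀ B : Matrix (Fin M) (Fin M) ℂ,
        ((B * W).trace).re = ∑ i, lam i * (star (vc i) ⬝ᵥ B *ᵥ (vc i)).re := by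
  have hH := hW.1
  set U : Matrix (Fin M) (Fin M) ℂ := (Matrix.IsHermitian.eigenvectorUnitary hH :
    Matrix (Fin M) (Fin M) ℂ) with hU
  refine ⟨hH.eigenvalues, fun i => fun j => U j i, hW.eigenvalues_nonneg, ?_, ?_⟩
  · intro i
    have hUU : star U * U = 1 :=
      Matrix.mem_unitaryGroup_iff'.mp (Matrix.IsHermitian.eigenvectorUnitary hH).2
    have : star (fun j => U j i) ⬝ᵥ (fun j => U j i) = (star U * U) i i := by
      simp [Matrix.mul_apply, dotProduct, Matrix.star_apply]
    rw [this, hUU, Matrix.one_apply_eq]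
  · intro B
    have hspec := hH.spectral_theorem
    have htr : (B * W).trace
        = ((star U * B * U) * Matrix.diagonal (RCLike.ofReal ∘ hH.eigenvalues)).trace := by
      conv_lhs => rw [hspec]
      rw [Unitary.conjStarAlgAut_apply, ← hU]
      rw [show B * (U * Matrix.diagonal (RCLike.ofReal ∘ hH.eigenvalues) * star U)
          = (B * U * Matrix.diagonal (RCLike.ofReal ∘ hH.eigenvalues)) * star U by
        noncomm_ring]
      rw [Matrix.trace_mul_comm]
      noncomm_ring
    rw [htr]
    have hdiag : ((star U * B * U) * Matrix.diagonal (RCLike.ofReal ∘ hH.eigenvalues)).trace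
        = ∑ i, (star U * B * U) i i * ((hH.eigenvalues i : ℝ) : ℂ) := by
      simp [Matrix.trace, Matrix.diag, Matrix.mul_diagonal, RCLike.ofReal]
    rw [hdiag]
    have hent : ∀ i, (star U * B * U) i i
        = star (fun j => U j i) ⬝ᵥ B *ᵥ (fun j => U j i) := by
      intro i
      simp only [Matrix.mul_apply, dotProduct, Matrix.mulVec, Matrix.star_apply,
        Pi.star_apply, Finset.sum_mul, Finset.mul_sum]
      rw [Finset.sum_comm]
      apply Finset.sum_congr rfl
      intro j _
      apply Finset.sum_congr rfl
      intro k _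
      ring
    rw [Complex.re_sum]
    apply Finset.sum_congr rfl
    intro i _
    rw [hent i, mul_comm, Complex.re_ofReal_mul]

lemma exists_rank_one_data (hM : 1 ≤ M) (A C : Matrix (Fin M) (Fin M) ℂ)
    (hA : A.IsHermitian) (hC : C.IsHermitian)
    (W : Matrix (Fin M) (Fin M) ℂ) (hW : W.PosSemidef) :
    ∃ (t : ℝ) (x : Fin M → ℂ), 0 ≤ t ∧ t = (W.trace).re ∧ star x ⬝ᵥ x = 1 ∧
      t * (star x ⬝ᵥ A *ᵥ x).re = ((A * W).trace).re ∧
      t * (star x ⬝ᵥ C *ᵥ x).re = ((C * W).trace).re := by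
  have : NeZero M := ⟨by omega⟩
  obtain ⟨lam, vc, hlam, hvc, htr⟩ := psd_decomp W hW
  set t : ℝ := ∑ i, lam i with ht
  have ht0 : 0 ≤ t := Finset.sum_nonneg fun i _ => hlam i
  have htW : t = (W.trace).re := by
    have h1 := htr 1
    rw [one_mul] at h1
    simp only [Matrix.one_mulVec] at h1
    rw [h1, ht]
    apply Finset.sum_congr rfl
    intro i _
    rw [hvc i, Complex.one_re, mul_one]
  rcases eq_or_lt_of_le ht0 with h0 | hpos
  · -- all eigenvalues zero
    have hall : ∀ i, lam i = 0 := by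
      intro i
      have := (Finset.sum_eq_zero_iff_of_nonneg (fun i _ => hlam i)).mp (h0.symm)
      exact this i (Finset.mem_univ i)
    have hzero : ∀ B : Matrix (Fin M) (Fin M) ℂ, ((B * W).trace).re = 0 := by
      intro B
      rw [htr B]
      apply Finset.sum_eq_zero
      intro i _
      rw [hall i, zero_mul]
    refine ⟨0, Pi.single ⟨0, hM⟩ 1, le_refl 0, by rw [← htW, ← h0], ?_, ?_, ?_⟩
    · simp [dotProduct, Pi.single_apply, apply_ite]
    · rw [hzero A, zero_mul]
    · rw [hzero C, zero_mul]
  · -- positive trace: use convexity of the joint numerical range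
    have hsum1 : ∑ i, lam i / t = 1 := by
      rw [← Finset.sum_div, ← ht, div_self hpos.ne']
    have hmem := (TH_convex A C hA hC).sum_mem (t := Finset.univ)
      (w := fun i => lam i / t)
      (z := fun i => ((star (vc i) ⬝ᵥ A *ᵥ vc i).re, (star (vc i) ⬝ᵥ C *ᵥ vc i).re))
      (fun i _ => div_nonneg (hlam i) hpos.le) hsum1
      (fun i _ => ⟨vc i, hvc i, rfl, rfl⟩)
    obtain ⟨x, hx, h1, h2⟩ := hmem
    refine ⟨t, x, ht0, htW, hx, ?_, ?_⟩
    · rw [← h1, htr A]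
      have : (∑ i, (lam i / t) •
          ((star (vc i) ⬝ᵥ A *ᵥ vc i).re, (star (vc i) ⬝ᵥ C *ᵥ vc i).re)).1
          = ∑ i, (lam i / t) * (star (vc i) ⬝ᵥ A *ᵥ vc i).re := by
        simp [Prod.fst_sum]
      rw [this, Finset.mul_sum]
      apply Finset.sum_congr rfl
      intro i _
      field_simp
    · rw [← h2, htr C]
      have : (∑ i, (lam i / t) •
          ((star (vc i) ⬝ᵥ A *ᵥ vc i).re, (star (vc i) ⬝ᵥ C *ᵥ vc i).re)).2
          = ∑ i, (lam i / t) * (star (vc i) ⬝ᵥ C *ᵥ vc i).re := by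
        simp [Prod.snd_sum]
      rw [this, Finset.mul_sum]
      apply Finset.sum_congr rfl
      intro i _
      field_simp


end AuxTH

/-- SDP rank reduction: a complex SDP with two linear constraints (one of them a trace
bound, making the feasible set bounded) that has an optimal solution also has a
rank-one optimal solution. -/
theorem sdp_rank_one_solution (M : ℕ) (hM : 1 ≤ M)
    (C A1 : Matrix (Fin M) (Fin M) ℂ) (hC : C.IsHermitian) (hA1 : A1.IsHermitian)
    (b1 b2 : ℝ) (hb2 : 0 < b2)
    (v : ℝ)
    (hopt : IsGreatest {x : ℝ | ∃ W : Matrix (Fin M) (Fin M) ℂ,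
        W.PosSemidef ∧ b1 ≤ ((A1 * W).trace).re ∧ (W.trace).re ≤ b2 ∧
        x = ((C * W).trace).re} v) :
    ∃ W : Matrix (Fin M) (Fin M) ℂ,
      W.PosSemidef ∧ b1 ≤ ((A1 * W).trace).re ∧ (W.trace).re ≤ b2 ∧
      ((C * W).trace).re = v ∧ W.rank ≤ 1 := by
  obtain ⟨W, hWpsd, hW1, hW2, hWv⟩ := hopt.1
  obtain ⟨t, x, ht0, htW, hx, hAx, hCx⟩ := exists_rank_one_data hM A1 C hA1 hC W hWpsd
  set x' : Fin M → ℂ := ((Real.sqrt t : ℝ) : ℂ) • x with hx'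
  set Ws : Matrix (Fin M) (Fin M) ℂ := Matrix.replicateCol Unit x' * (Matrix.replicateCol Unit x')ᴴ with hWs
  have hent : ∀ i j, Ws i j = (t : ℂ) * (x i * star (x j)) := by
    intro i j
    rw [hWs, Matrix.mul_apply]
    simp only [Matrix.conjTranspose_apply, Matrix.replicateCol_apply, hx', Pi.smul_apply,
      smul_eq_mul, star_mul', Complex.star_def, Complex.conj_ofReal,
      Finset.univ_unique, Finset.sum_singleton]
    have hst : ((Real.sqrt t : ℝ) : ℂ) * ((Real.sqrt t : ℝ) : ℂ) = (t : ℂ) := by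
      rw [← Complex.ofReal_mul, Real.mul_self_sqrt ht0]
    linear_combination (x i * (starRingEnd ℂ) (x j)) * hst
  have htrace : ∀ B : Matrix (Fin M) (Fin M) ℂ,
      (B * Ws).trace = (t : ℂ) * (star x ⬝ᵥ B *ᵥ x) := by
    intro B
    rw [Matrix.trace]
    simp only [Matrix.diag_apply, Matrix.mul_apply, hent, dotProduct, Matrix.mulVec,
      Pi.star_apply, Finset.mul_sum]
    apply Finset.sum_congr rfl
    intro i _
    apply Finset.sum_congr rfl
    intro j _
    ring
  have htrWs : Ws.trace = (t : ℂ) := by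
    have h := htrace 1
    rw [one_mul] at h
    rw [h]
    simp only [Matrix.one_mulVec, hx, mul_one]
  refine ⟨Ws, ?_, ?_, ?_, ?_, ?_⟩
  · rw [hWs]
    exact Matrix.posSemidef_self_mul_conjTranspose _
  · rw [htrace A1, Complex.re_ofReal_mul, hAx]
    exact hW1
  · rw [htrWs, Complex.ofReal_re, htW]
    exact hW2
  · rw [htrace C, Complex.re_ofReal_mul, hCx]
    exact hWv.symm
  · rw [hWs]
    calc (Matrix.replicateCol Unit x' * (Matrix.replicateCol Unit x')ᴴ).rank
        ≤ (Matrix.replicateCol Unit x').rank := Matrix.rank_mul_le_left _ _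
      _ ≤ Fintype.card Unit := Matrix.rank_le_card_width _
      _ = 1 := Fintype.card_unit
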